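/- Let h = (h_1,h_2) ∈ C^1([0,1],ℝ^2) with h(0) = (0,0) and h(1) = (1,1). For n ≥ 3 define W_n = (W_n^1, W_n^2) : [0,1] → ℝ^2 by W_n(t) = (0,0) for 0 ≤ t < 1/2 − 1/n, W_n(t) = h(n(t − 1/2 + 1/n)) for 1/2 − 1/n ≤ t < 1/2, and W_n(t) = (1,1) for 1/2 ≤ t ≤ 1. Define X_n = (X_n^1, X_n^2) : [0,1] → ℝ^2 by X_n^1 = W_n^1 and X_n^2(t) = ∫_0^t X_n^1(s) (W_n^2)'(s) ds, where (W_n^2)' denotes the piecewise derivative (equal to 0 off [1/2−1/n, 1/2) and to n·h_2'(n(s−1/2+1/n)) on it). Then: (1) for every t ∈ [0,1], W_n(t) → L(t) as n → ∞, where L(t) = (0,0) for t < 1/2 and L(t) = (1,1) for t ≥ 1/2; and (2) for every t ∈ [0,1], X_n(t) → X(t) as n → ∞, where X(t) = (0,0) for t < 1/2 and X(t) = (1, ∫_0^1 h_1(s) h_2'(s) ds) for t ≥ 1/2. -/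

import Mathlib

open Filter Topology

/-- For the explicit excursion approximation `W_n` built from
`h = (h₁,h₂) ∈ C¹([0,1],ℝ²)` with `h(0) = (0,0)`, `h(1) = (1,1)`, the paths `W_n`
converge pointwise to the jump path `L`, and the solutions `X_n = (W_n^1, ∫ X_n^1 dW_n^2)`
converge pointwise to the path jumping to `(1, ∫₀¹ h₁ h₂')`. -/
theorem stmt15 (h₁ h₂ : ℝ → ℝ)
    (hh₁ : ContDiffOn ℝ 1 h₁ (Set.Icc 0 1)) (hh₂ : ContDiffOn ℝ 1 h₂ (Set.Icc 0 1))
    (h₁0 : h₁ 0 = 0) (h₂0 : h₂ 0 = 0) (h₁1 : h₁ 1 = 1) (h₂1 : h₂ 1 = 1)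
    (W₁ W₂ g X₂ : ℕ → ℝ → ℝ)
    (hW₁ : ∀ n : ℕ, ∀ t : ℝ, W₁ n t = if t < 1/2 - 1/(n : ℝ) then 0
      else if t < 1/2 then h₁ ((n : ℝ) * (t - 1/2 + 1/(n : ℝ))) else 1)
    (hW₂ : ∀ n : ℕ, ∀ t : ℝ, W₂ n t = if t < 1/2 - 1/(n : ℝ) then 0
      else if t < 1/2 then h₂ ((n : ℝ) * (t - 1/2 + 1/(n : ℝ))) else 1)
    (hg : ∀ n : ℕ, ∀ t : ℝ, g n t = if 1/2 - 1/(n : ℝ) ≤ t ∧ t < 1/2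
      then (n : ℝ) * derivWithin h₂ (Set.Icc 0 1) ((n : ℝ) * (t - 1/2 + 1/(n : ℝ)))
      else 0)
    (hX₂ : ∀ n : ℕ, ∀ t : ℝ, X₂ n t = ∫ s in (0 : ℝ)..t, W₁ n s * g n s) :
    ∀ t ∈ Set.Icc (0 : ℝ) 1,
      ((t < 1/2 → Tendsto (fun n : ℕ => (W₁ n t, W₂ n t)) atTop (𝓝 ((0 : ℝ), (0 : ℝ))))
        ∧ (1/2 ≤ t → Tendsto (fun n : ℕ => (W₁ n t, W₂ n t)) atTop (𝓝 ((1 : ℝ), (1 : ℝ)))))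
      ∧ ((t < 1/2 → Tendsto (fun n : ℕ => (W₁ n t, X₂ n t)) atTop (𝓝 ((0 : ℝ), (0 : ℝ))))
        ∧ (1/2 ≤ t → Tendsto (fun n : ℕ => (W₁ n t, X₂ n t)) atTop
            (𝓝 ((1 : ℝ), ∫ s in (0 : ℝ)..1, h₁ s * derivWithin h₂ (Set.Icc 0 1) s)))) := by
  have huniq : UniqueDiffOn ℝ (Set.Icc (0:ℝ) 1) := uniqueDiffOn_Icc (by norm_num)
  set F : ℝ → ℝ := fun s => h₁ s * derivWithin h₂ (Set.Icc 0 1) s with hFdef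
  have hFc : ContinuousOn F (Set.Icc 0 1) :=
    hh₁.continuousOn.mul (hh₂.continuousOn_derivWithin huniq le_rfl)
  intro t ht
  obtain ⟨ht0, ht1⟩ := ht
  -- eventually facts for t < 1/2
  have hev : t < 1/2 → ∀ᶠ n : ℕ in atTop, t < 1/2 - 1/(n : ℝ) := by
    intro htlt
    have h1 : ∀ᶠ n : ℕ in atTop, 1/(n : ℝ) < 1/2 - t :=
      tendsto_one_div_atTop_nhds_zero_nat.eventually (gt_mem_nhds (by linarith))
    exact h1.mono fun n hn => by linarith
  -- W₁ n t = 1 for all n when 1/2 ≤ t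
  have hW₁one : 1/2 ≤ t → ∀ n : ℕ, W₁ n t = 1 := by
    intro hle n
    rw [hW₁]
    have h1n : (0:ℝ) ≤ 1/(n:ℝ) := by positivity
    rw [if_neg (by push_neg; linarith), if_neg (by push_neg; linarith)]
  have hW₂one : 1/2 ≤ t → ∀ n : ℕ, W₂ n t = 1 := by
    intro hle n
    rw [hW₂]
    have h1n : (0:ℝ) ≤ 1/(n:ℝ) := by positivity
    rw [if_neg (by push_neg; linarith), if_neg (by push_neg; linarith)]
  -- the key integral computation
  have key : ∀ n : ℕ, 2 ≤ n → 1/2 ≤ t →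
      (∫ s in (0:ℝ)..t, W₁ n s * g n s) = ∫ s in (0:ℝ)..1, F s := by
    intro n hn2 hht
    have hn0 : (0:ℝ) < n := by exact_mod_cast Nat.lt_of_lt_of_le (by norm_num) hn2
    have hne : (n:ℝ) ≠ 0 := ne_of_gt hn0
    have hninv : (n:ℝ) * (1/(n:ℝ)) = 1 := by field_simp
    have hn2' : (2:ℝ) ≤ n := by exact_mod_cast hn2
    have hinvle : 1/(n:ℝ) ≤ 1/2 := by
      rw [div_le_div_iff₀ hn0 (by norm_num)]; linarith
    have hinv0 : (0:ℝ) < 1/(n:ℝ) := by positivity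
    have ha0 : (0:ℝ) ≤ 1/2 - 1/(n:ℝ) := by linarith
    have hab : 1/2 - 1/(n:ℝ) ≤ (1:ℝ)/2 := by linarith
    have hbt : (1:ℝ)/2 ≤ t := hht
    set f : ℝ → ℝ := fun s => W₁ n s * g n s with hf
    set G : ℝ → ℝ := fun s => (n:ℝ) * F ((n:ℝ) * s + (1 - (n:ℝ)/2)) with hG
    have hna : (n:ℝ) * (1/2 - 1/(n:ℝ)) = (n:ℝ)/2 - 1 := by
      field_simp
    -- the pieces
    have hEq0 : Set.EqOn f (fun _ => (0:ℝ)) (Set.uIcc 0 (1/2 - 1/(n:ℝ))) := by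
      intro s hs
      rw [Set.uIcc_of_le ha0] at hs
      have hsa : s ≤ 1/2 - 1/(n:ℝ) := hs.2
      show W₁ n s * g n s = 0
      rw [hW₁]
      split_ifs with h1 h2
      · exact zero_mul _
      · have hsa' : s = 1/2 - 1/(n:ℝ) := le_antisymm hsa (not_lt.mp h1)
        have harg : (n:ℝ) * (s - 1/2 + 1/(n:ℝ)) = 0 := by rw [hsa']; ring
        rw [harg, h₁0, zero_mul]
      · exact absurd (lt_of_le_of_lt hsa (by linarith)) h2
    have hEq2 : Set.EqOn f (fun _ => (0:ℝ)) (Set.uIcc (1/2) t) := by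
      intro s hs
      rw [Set.uIcc_of_le hbt] at hs
      show W₁ n s * g n s = 0
      rw [hg, if_neg (by push_neg; intro _; exact hs.1), mul_zero]
    have hae : ∀ᵐ s : ℝ, s ≠ (1:ℝ)/2 := by
      rw [MeasureTheory.ae_iff]
      simpa using MeasureTheory.measure_singleton ((1:ℝ)/2)
    have hEqm : ∀ᵐ s : ℝ, s ∈ Set.uIoc (1/2 - 1/(n:ℝ)) (1/2) → f s = G s := by
      refine hae.mono fun s hsb hs => ?_
      rw [Set.uIoc_of_le hab] at hs
      have hsa : 1/2 - 1/(n:ℝ) < s := hs.1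
      have hsb' : s < 1/2 := lt_of_le_of_ne hs.2 hsb
      show W₁ n s * g n s = G s
      rw [hW₁, hg, if_neg (not_lt.mpr hsa.le), if_pos hsb', if_pos ⟨hsa.le, hsb'⟩]
      have harg : (n:ℝ) * (s - 1/2 + 1/(n:ℝ)) = (n:ℝ) * s + (1 - (n:ℝ)/2) := by
        field_simp; ring
      rw [harg]
      simp only [hG, hFdef]
      ring
    -- integrability
    have hmaps : Set.MapsTo (fun s => (n:ℝ) * s + (1 - (n:ℝ)/2))
        (Set.Icc (1/2 - 1/(n:ℝ)) (1/2)) (Set.Icc 0 1) := by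
      intro s hs
      obtain ⟨hs1, hs2⟩ := hs
      have e1 : (n:ℝ) * (1/2 - 1/(n:ℝ)) ≤ (n:ℝ) * s := mul_le_mul_of_nonneg_left hs1 hn0.le
      have e2 : (n:ℝ) * s ≤ (n:ℝ) * (1/2) := mul_le_mul_of_nonneg_left hs2 hn0.le
      have key1 : (n:ℝ) * s + (1 - (n:ℝ)/2) ∈ Set.Icc (0:ℝ) 1 :=
        ⟨by nlinarith, by nlinarith⟩
      exact key1
    have hGc : ContinuousOn G (Set.Icc (1/2 - 1/(n:ℝ)) (1/2)) := by
      apply ContinuousOn.mul continuousOn_const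
      exact hFc.comp
        (((continuous_const.mul continuous_id).add continuous_const).continuousOn) hmaps
    have IG : IntervalIntegrable G MeasureTheory.volume (1/2 - 1/(n:ℝ)) (1/2) := by
      apply ContinuousOn.intervalIntegrable
      rwa [Set.uIcc_of_le hab]
    have Im : IntervalIntegrable f MeasureTheory.volume (1/2 - 1/(n:ℝ)) (1/2) := by
      apply IG.congr_ae
      have h1 := MeasureTheory.ae_restrict_of_ae (s := Set.uIoc (1/2 - 1/(n:ℝ)) (1/2)) hEqm
      have h2 := MeasureTheory.ae_restrict_mem (μ := MeasureTheory.volume) measurableSet_uIoc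
        (s := Set.uIoc (1/2 - 1/(n:ℝ)) (1/2))
      filter_upwards [h1, h2] with s hs1 hs2
      exact (hs1 hs2).symm
    have I0 : IntervalIntegrable f MeasureTheory.volume 0 (1/2 - 1/(n:ℝ)) := by
      apply (intervalIntegrable_const (c := (0:ℝ))).congr_ae
      have h2 := MeasureTheory.ae_restrict_mem (μ := MeasureTheory.volume) measurableSet_uIoc
        (s := Set.uIoc 0 (1/2 - 1/(n:ℝ)))
      filter_upwards [h2] with s hs
      exact (hEq0 (Set.uIoc_subset_uIcc hs)).symm
    have I2 : IntervalIntegrable f MeasureTheory.volume (1/2) t := by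
      apply (intervalIntegrable_const (c := (0:ℝ))).congr_ae
      have h2 := MeasureTheory.ae_restrict_mem (μ := MeasureTheory.volume) measurableSet_uIoc
        (s := Set.uIoc (1/2) t)
      filter_upwards [h2] with s hs
      exact (hEq2 (Set.uIoc_subset_uIcc hs)).symm
    -- split the integral
    have split1 : (∫ s in (0:ℝ)..(1/2 - 1/(n:ℝ)), f s) + (∫ s in (1/2 - 1/(n:ℝ))..(1/2), f s)
        = ∫ s in (0:ℝ)..(1/2), f s :=
      intervalIntegral.integral_add_adjacent_intervals I0 Im
    have split2 : (∫ s in (0:ℝ)..(1/2), f s) + (∫ s in (1/2:ℝ)..t, f s)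
        = ∫ s in (0:ℝ)..t, f s :=
      intervalIntegral.integral_add_adjacent_intervals (I0.trans Im) I2
    have e0 : (∫ s in (0:ℝ)..(1/2 - 1/(n:ℝ)), f s) = 0 := by
      rw [intervalIntegral.integral_congr hEq0]; simp
    have e2 : (∫ s in (1/2:ℝ)..t, f s) = 0 := by
      rw [intervalIntegral.integral_congr hEq2]; simp
    have em : (∫ s in (1/2 - 1/(n:ℝ))..(1/2), f s)
        = ∫ s in (1/2 - 1/(n:ℝ))..(1/2), G s :=
      intervalIntegral.integral_congr_ae hEqm
    have eG : (∫ s in (1/2 - 1/(n:ℝ))..(1/2), G s) = ∫ s in (0:ℝ)..1, F s := by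
      have h1 : (∫ s in (1/2 - 1/(n:ℝ))..(1/2), G s)
          = (n:ℝ) • ∫ s in (1/2 - 1/(n:ℝ))..(1/2), F ((n:ℝ) * s + (1 - (n:ℝ)/2)) := by
        rw [← intervalIntegral.integral_smul]
        simp [hG, smul_eq_mul]
      rw [h1, intervalIntegral.smul_integral_comp_mul_add]
      have hea : (n:ℝ) * (1/2 - 1/(n:ℝ)) + (1 - (n:ℝ)/2) = 0 := by
        rw [hna]; ring
      have heb : (n:ℝ) * (1/2) + (1 - (n:ℝ)/2) = 1 := by ring
      rw [hea, heb]
    show (∫ s in (0:ℝ)..t, f s) = ∫ s in (0:ℝ)..1, F s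
    rw [← split2, ← split1, e0, e2, em, eG]
    ring
  refine ⟨⟨?_, ?_⟩, ?_, ?_⟩
  · -- t < 1/2 : W convergence
    intro htlt
    apply Tendsto.congr' _ tendsto_const_nhds
    filter_upwards [hev htlt] with n hn
    have h1 : W₁ n t = 0 := by rw [hW₁, if_pos hn]
    have h2 : W₂ n t = 0 := by rw [hW₂, if_pos hn]
    rw [h1, h2]
  · -- 1/2 ≤ t : W convergence
    intro hle
    apply Tendsto.congr' _ tendsto_const_nhds
    filter_upwards with n
    rw [hW₁one hle n, hW₂one hle n]
  · -- t < 1/2 : X convergence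
    intro htlt
    apply Tendsto.congr' _ tendsto_const_nhds
    filter_upwards [hev htlt] with n hn
    have h1 : W₁ n t = 0 := by rw [hW₁, if_pos hn]
    have h2 : X₂ n t = 0 := by
      rw [hX₂]
      have : Set.EqOn (fun s => W₁ n s * g n s) (fun _ => (0:ℝ)) (Set.uIcc 0 t) := by
        intro s hs
        rw [Set.uIcc_of_le ht0] at hs
        show W₁ n s * g n s = 0
        rw [hW₁, if_pos (lt_of_le_of_lt hs.2 hn), zero_mul]
      rw [intervalIntegral.integral_congr this]; simp
    rw [h1, h2]
  · -- 1/2 ≤ t : X convergence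
    intro hle
    apply Tendsto.congr' _ tendsto_const_nhds
    filter_upwards [eventually_ge_atTop 2] with n hn
    rw [hW₁one hle n, hX₂, key n hn hle]
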